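/- Let N ≥ 1 and let w₁,…,w_N be positive integers; set r = 1 + w₁ + ⋯ + w_N, W = (∏_{j=1}^N w_j^{w_j})^{1/r} (the positive real r-th root), and ξ = e^{2πi/r}. Define the holomorphic function f on (ℂ∖{0})^N by f(x₁,…,x_N) = x₁ + ⋯ + x_N + x₁^{−w₁}⋯x_N^{−w_N}. Then the set of critical points of f (points where all partial derivaties ∂f/∂x_i vanish) is exactly { p_k : k = 0,1,…,r−1 }, where p_k = (w₁ξ^k/W, …, w_Nξ^k/W). -/

import Mathlib

/-- product of zpow with fixed base equals zpow of sum -/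
lemma prod_zpow_fixed_base {α : Type*} (u : ℂ) (hu : u ≠ 0) (s : Finset α) (f : α → ℤ) :
    ∏ i ∈ s, u ^ f i = u ^ (∑ i ∈ s, f i) := by
  classical
  induction s using Finset.induction with
  | empty => simp
  | insert _ _ h ih => rw [Finset.prod_insert h, Finset.sum_insert h, ih, zpow_add₀ hu]

/-- Evaluation of the monomial product at a point of the form `(w₁ u, …, w_N u)`. -/
lemma prod_eval_aux {N : ℕ} (w : Fin N → ℕ) (u : ℂ) (hu : u ≠ 0) :
    ∏ j, ((w j : ℂ) * u) ^ (-(w j : ℤ)) =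
      (∏ j, (w j : ℂ) ^ (w j))⁻¹ * u ^ (-(∑ j, w j : ℤ)) := by
  have h1 : ∀ j : Fin N, ((w j : ℂ) * u) ^ (-(w j : ℤ))
      = (w j : ℂ) ^ (-(w j : ℤ)) * u ^ (-(w j : ℤ)) := fun j => mul_zpow _ _ _
  rw [Finset.prod_congr rfl fun j _ => h1 j, Finset.prod_mul_distrib]
  congr 1
  · rw [← Finset.prod_inv_distrib]
    exact Finset.prod_congr rfl fun j _ => by rw [zpow_neg, zpow_natCast]
  · rw [prod_zpow_fixed_base u hu]
    congr 1
    rw [← Finset.sum_neg_distrib]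

/-- The derivative of the LG potential in the `i`-th coordinate direction. -/
lemma hasDerivAt_LG {N : ℕ} (w : Fin N → ℕ) (x : Fin N → ℂ) (hx : ∀ j, x j ≠ 0) (i : Fin N) :
    HasDerivAt (fun t => (∑ j, Function.update x i t j) +
        ∏ j, (Function.update x i t j) ^ (-(w j : ℤ)))
      (1 - (w i : ℂ) * (x i)⁻¹ * ∏ j, (x j) ^ (-(w j : ℤ))) (x i) := by
  classical
  set S : ℂ := ∑ j ∈ Finset.univ.erase i, x j with hS
  set Q : ℂ := ∏ j ∈ Finset.univ.erase i, (x j) ^ (-(w j : ℤ)) with hQ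
  have hfun : (fun t => (∑ j, Function.update x i t j) +
      ∏ j, (Function.update x i t j) ^ (-(w j : ℤ)))
      = fun t => (t + S) + t ^ (-(w i : ℤ)) * Q := by
    funext t
    have hsum : ∑ j, Function.update x i t j = t + S := by
      rw [← Finset.add_sum_erase _ _ (Finset.mem_univ i), Function.update_self]
      congr 1
      exact Finset.sum_congr rfl fun j hj =>
        Function.update_of_ne (Finset.mem_erase.mp hj).1 _ _
    have hprod : ∏ j, (Function.update x i t j) ^ (-(w j : ℤ)) = t ^ (-(w i : ℤ)) * Q := by
      rw [← Finset.mul_prod_erase _ _ (Finset.mem_univ i), Function.update_self]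
      congr 1
      exact Finset.prod_congr rfl fun j hj => by
        rw [Function.update_of_ne (Finset.mem_erase.mp hj).1]
    rw [hsum, hprod]
  rw [hfun]
  have hP : ∏ j, (x j) ^ (-(w j : ℤ)) = (x i) ^ (-(w i : ℤ)) * Q :=
    (Finset.mul_prod_erase _ _ (Finset.mem_univ i)).symm
  have hd := ((hasDerivAt_id (x i)).add_const S).add
    ((hasDerivAt_zpow (-(w i : ℤ)) (x i) (Or.inl (hx i))).mul_const Q)
  refine hd.congr_deriv ?_
  rw [hP, zpow_sub_one₀ (hx i)]
  push_cast
  ring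

theorem critical_points_of_LG_potential_of_weighted_projective_space
    (N : ℕ) (hN : 1 ≤ N) (w : Fin N → ℕ) (hw : ∀ i, 0 < w i)
    (r : ℕ) (hr : r = 1 + ∑ i, w i)
    (W : ℝ) (hW : W = Real.rpow (∏ j, (w j : ℝ) ^ (w j)) ((r : ℝ)⁻¹))
    (ξ : ℂ) (hξ : ξ = Complex.exp (2 * (Real.pi : ℂ) * Complex.I / (r : ℂ)))
    (f : (Fin N → ℂ) → ℂ)
    (hf : f = fun x => (∑ i, x i) + ∏ j, (x j) ^ (-(w j : ℤ))) :
    {x : Fin N → ℂ | (∀ i, x i ≠ 0) ∧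
        ∀ i, HasDerivAt (fun t => f (Function.update x i t)) 0 (x i)} =
      {x : Fin N → ℂ | ∃ k : ℕ, k < r ∧ x = fun i => (w i : ℂ) * ξ ^ k / (W : ℂ)} := by
  classical
  subst hf
  have hr0 : r ≠ 0 := by omega
  haveI : NeZero r := ⟨hr0⟩
  set C : ℂ := ∏ j, (w j : ℂ) ^ (w j) with hC
  have hCr : (0:ℝ) < ∏ j, (w j : ℝ) ^ (w j) :=
    Finset.prod_pos fun j _ => pow_pos (by exact_mod_cast hw j) _
  have hWpos : 0 < W := by
    rw [hW]; exact Real.rpow_pos_of_pos hCr _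
  have hW0 : (W : ℂ) ≠ 0 := by exact_mod_cast hWpos.ne'
  have hWr : (W : ℂ) ^ r = C := by
    have h2 : W ^ r = ∏ j, (w j : ℝ) ^ (w j) := by
      rw [hW]
      have : Real.rpow (∏ j, (w j : ℝ) ^ (w j)) ((r : ℝ)⁻¹)
          = (∏ j, (w j : ℝ) ^ (w j)) ^ ((r : ℝ)⁻¹) := rfl
      rw [this, ← Real.rpow_natCast ((∏ j, (w j : ℝ) ^ (w j)) ^ ((r : ℝ)⁻¹)) r,
        ← Real.rpow_mul hCr.le, inv_mul_cancel₀ (by exact_mod_cast hr0), Real.rpow_one]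
    calc (W : ℂ) ^ r = ((W ^ r : ℝ) : ℂ) := by push_cast; ring
      _ = C := by rw [h2, hC]; push_cast; rfl
  have hC0 : C ≠ 0 := by rw [← hWr]; exact pow_ne_zero _ hW0
  have hξprim : IsPrimitiveRoot ξ r := by
    rw [hξ]; exact Complex.isPrimitiveRoot_exp r hr0
  have hξr : ξ ^ r = 1 := hξprim.pow_eq_one
  have hξ0 : ξ ≠ 0 := fun h => by simp [h, zero_pow hr0] at hξr
  have hsum : (r : ℤ) = 1 + (∑ j, w j : ℤ) := by exact_mod_cast hr
  ext x
  simp only [Set.mem_setOf_eq]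
  constructor
  · rintro ⟨hx0, hcrit⟩
    set P : ℂ := ∏ j, (x j) ^ (-(w j : ℤ)) with hP
    have hxi : ∀ i, x i = (w i : ℂ) * P := by
      intro i
      have h1 := hasDerivAt_LG w x hx0 i
      have h2 := (hcrit i).unique h1
      rw [← hP] at h2
      have hwi : (w i : ℂ) ≠ 0 := by exact_mod_cast (hw i).ne'
      have h3 : (w i : ℂ) * (x i)⁻¹ * P = 1 := by linear_combination h2
      field_simp at h3
      rw [div_eq_one_iff_eq (hx0 i)] at h3
      exact h3.symm
    have hP0 : P ≠ 0 := by
      intro h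
      exact hx0 ⟨0, hN⟩ (by rw [hxi ⟨0, hN⟩, h, mul_zero])
    have hprod : P = C⁻¹ * P ^ (-(∑ j, w j : ℤ)) := by
      calc P = ∏ j, ((w j : ℂ) * P) ^ (-(w j : ℤ)) := by
              rw [hP]; exact Finset.prod_congr rfl fun j _ => by rw [← hxi j]
        _ = _ := prod_eval_aux w P hP0
    have hPr : P ^ (r : ℤ) * C = 1 := by
      rw [hsum, zpow_add₀ hP0, zpow_one]
      have hs0 : P ^ (∑ j, w j : ℤ) ≠ 0 := zpow_ne_zero _ hP0
      calc P * P ^ (∑ j, w j : ℤ) * C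
          = (C⁻¹ * P ^ (-(∑ j, w j : ℤ))) * P ^ (∑ j, w j : ℤ) * C := by rw [← hprod]
        _ = 1 := by rw [zpow_neg]; field_simp
    have hz : ((W : ℂ) * P) ^ r = 1 := by
      rw [mul_pow, hWr]
      calc C * P ^ r = P ^ (r : ℤ) * C := by rw [zpow_natCast]; ring
        _ = 1 := hPr
    obtain ⟨k, hk, hzk⟩ := hξprim.eq_pow_of_pow_eq_one hz
    refine ⟨k, hk, ?_⟩
    funext i
    rw [hxi i, hzk]
    field_simp
  · rintro ⟨k, hk, rfl⟩
    set u : ℂ := ξ ^ k / W with hu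
    have hu0 : u ≠ 0 := div_ne_zero (pow_ne_zero _ hξ0) hW0
    have hxval : ∀ i : Fin N, (w i : ℂ) * ξ ^ k / (W : ℂ) = (w i : ℂ) * u := fun i => by
      rw [hu, mul_div_assoc]
    have hx0 : ∀ i : Fin N, (w i : ℂ) * ξ ^ k / (W : ℂ) ≠ 0 := by
      intro i
      rw [hxval i]
      exact mul_ne_zero (by exact_mod_cast (hw i).ne') hu0
    have hur : u ^ (r : ℤ) * C = 1 := by
      have h1 : u ^ r = 1 / C := by
        rw [hu, div_pow, ← pow_mul, mul_comm k r, pow_mul, hξr, one_pow, hWr]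
      rw [zpow_natCast, h1]
      field_simp
    have hCu : C⁻¹ = u ^ (r : ℤ) := (eq_inv_of_mul_eq_one_left hur).symm
    have hPu : (∏ j, ((w j : ℂ) * ξ ^ k / (W : ℂ)) ^ (-(w j : ℤ))) = u := by
      rw [Finset.prod_congr rfl fun j _ => by rw [hxval j], prod_eval_aux w u hu0,
        ← hC, hCu, ← zpow_add₀ hu0, hsum]
      have h2 : (1 + (∑ j, w j : ℤ)) + (-(∑ j, w j : ℤ)) = 1 := by ring
      rw [h2, zpow_one]
    refine ⟨hx0, fun i => ?_⟩
    have h1 := hasDerivAt_LG w (fun i => (w i : ℂ) * ξ ^ k / (W : ℂ)) hx0 i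
    convert h1 using 1
    rw [hPu, hxval i]
    have hwi : (w i : ℂ) ≠ 0 := by exact_mod_cast (hw i).ne'
    field_simp
    ring
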